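/- In BS(1,p) with p ≥ 2, for any word w over {a^{±1}, t^{±1}} of length n with nonnegative t-exponent sum, there exists a word of the form t⁻ᵏ a^{ε₀} t ⋯ t a^{ε_q} t⁻ᵐ representing the same element with length at most n, where additionally ε₀ ≠ 0 if k > 0 and ε_q ≠ 0 if m > 0 and |ε_i| < p for i < q, |ε_q| < 3p, k, m ≥ 0, q ≥ k + m. (Existence only, no complexity claim.) -/
import Mathlib


/-- The single defining relation of `BS(1,p)`: `t a t⁻¹ a^{-p}`. -/
def BSrel (p : ℕ) : Set (FreeGroup Bool) :=
  {FreeGroup.of true * FreeGroup.of false * (FreeGroup.of true)⁻¹ * (FreeGroup.of false ^ p)⁻¹}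

/-- The solvable Baumslag–Solitar group `BS(1,p) = ⟨a, t | t a t⁻¹ = aᵖ⟩`. -/
abbrev BS (p : ℕ) : Type := PresentedGroup (BSrel p)

/-- The generator `a` of `BS(1,p)`. -/
def gena (p : ℕ) : BS p := PresentedGroup.of false

/-- The generator `t` of `BS(1,p)`. -/
def gent (p : ℕ) : BS p := PresentedGroup.of true

/-- A letter over the alphabet `{a, a⁻¹, t, t⁻¹}`: first component `false` = `a`,
`true` = `t`; second component is the sign (`true` = positive). -/
abbrev Letter : Type := Bool × Bool

/-- Value of a letter in `BS(1,p)`. -/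
def letterVal (p : ℕ) : Letter → BS p
  | (g, s) => (if g then gent p else gena p) ^ (if s then (1 : ℤ) else -1)

/-- The element of `BS(1,p)` represented by a word. -/
def wordVal (p : ℕ) (w : List Letter) : BS p := (w.map (letterVal p)).prod

def tP : Letter := (true, true)
def tN : Letter := (true, false)
def aP : Letter := (false, true)
def aN : Letter := (false, false)

/-- `t`-exponent sum of a word. -/
def texp (w : List Letter) : ℤ := (w.count tP : ℤ) - (w.count tN : ℤ)

/-- A word of type `P`: contains at least one `t` and no `t⁻¹`. -/
def TypeP (w : List Letter) : Prop := tP ∈ w ∧ tN ∉ w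

/-- A word of type `N`: contains at least one `t⁻¹` and no `t`. -/
def TypeN (w : List Letter) : Prop := tN ∈ w ∧ tP ∉ w

/-- The word `a^x` (as a string of `|x|` letters). -/
def aWord (x : ℤ) : List Letter := List.replicate x.natAbs (false, decide (0 < x))

/-- The word `a^{ε₀} t a^{ε₁} t ⋯ t a^{ε_q}`. -/
def stackWord (ε : ℕ → ℤ) (q : ℕ) : List Letter :=
  ((List.range q).map (fun i => aWord (ε i) ++ [tP])).flatten ++ aWord (ε q)

/-- The word `t⁻ᵏ a^{ε₀} t ⋯ t a^{ε_q} t⁻ᵐ`. -/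
def canonWord (k : ℕ) (ε : ℕ → ℤ) (q m : ℕ) : List Letter :=
  List.replicate k tN ++ stackWord ε q ++ List.replicate m tN

/-- `ℤ[1/p]` as an additive subgroup of `ℚ`. -/
def Zp (p : ℕ) : AddSubgroup ℚ := AddSubgroup.closure {x : ℚ | ∃ n : ℕ, x = ((p : ℚ))⁻¹ ^ n}

lemma bs_rel (p : ℕ) : gent p * gena p * (gent p)⁻¹ = (gena p) ^ p := by
  have h : PresentedGroup.mk (BSrel p)
      (FreeGroup.of true * FreeGroup.of false * (FreeGroup.of true)⁻¹ *
        (FreeGroup.of false ^ p)⁻¹) = 1 := by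
    refine (QuotientGroup.eq_one_iff _).2 ?_
    exact Subgroup.subset_normalClosure rfl
  simp only [map_mul, map_inv, map_pow] at h
  have h2 : gent p * gena p * (gent p)⁻¹ * ((gena p) ^ p)⁻¹ = 1 := h
  exact mul_inv_eq_one.1 h2

lemma a_zpow_p (p : ℕ) (z : ℤ) :
    (gena p) ^ ((p : ℤ) * z) = gent p * (gena p) ^ z * (gent p)⁻¹ := by
  rw [zpow_mul, zpow_natCast, ← bs_rel, conj_zpow]

lemma a_mul_t (p : ℕ) (D : ℕ) (z : ℤ) :
    (gena p) ^ ((p : ℤ) ^ D * z) * (gent p) ^ (D : ℤ) = (gent p) ^ (D : ℤ) * (gena p) ^ z := by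
  induction D generalizing z with
  | zero => simp
  | succ D ih =>
    have h1 : ((p : ℤ)) ^ (D + 1) * z = (p : ℤ) ^ D * ((p : ℤ) * z) := by ring
    have h2 : (gena p) ^ ((p:ℤ) * z) * gent p = gent p * (gena p) ^ z := by
      rw [a_zpow_p]; group
    calc (gena p) ^ ((p : ℤ) ^ (D+1) * z) * (gent p) ^ ((D:ℤ)+1)
        = ((gena p) ^ ((p : ℤ) ^ D * ((p:ℤ) * z)) * (gent p) ^ (D:ℤ)) * gent p := by
          rw [h1]; group
      _ = ((gent p) ^ (D:ℤ) * (gena p) ^ ((p:ℤ) * z)) * gent p := by rw [ih]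
      _ = (gent p) ^ (D:ℤ) * ((gena p) ^ ((p:ℤ) * z) * gent p) := by group
      _ = (gent p) ^ (D:ℤ) * (gent p * (gena p) ^ z) := by rw [h2]
      _ = (gent p) ^ ((D:ℤ)+1) * (gena p) ^ z := by group

def tval : Bool × Bool → ℤ
  | (false, _) => 0
  | (true, true) => 1
  | (true, false) => -1

lemma texp_nil : texp [] = 0 := rfl

lemma texp_cons (x : Bool × Bool) (w : List (Bool × Bool)) :
    texp (x :: w) = tval x + texp w := by
  rcases x with ⟨b, s⟩
  cases b <;> cases s <;>
    simp [texp, tval, tP, tN, List.count_cons] <;> push_cast <;> ring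

def mnf : List (Bool × Bool) → ℤ
  | [] => 0
  | x :: w => min 0 (tval x + mnf w)

def mxf : List (Bool × Bool) → ℤ
  | [] => 0
  | x :: w => max 0 (tval x + mxf w)

def ntt : List (Bool × Bool) → ℕ
  | [] => 0
  | x :: w => (tval x).natAbs + ntt w

def naf : List (Bool × Bool) → ℕ
  | [] => 0
  | (b, _) :: w => (if b then 0 else 1) + naf w

lemma mnf_nonpos (w : List (Bool × Bool)) : mnf w ≤ 0 := by
  cases w <;> simp [mnf]

lemma mxf_nonneg (w : List (Bool × Bool)) : 0 ≤ mxf w := by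
  cases w <;> simp [mxf]

lemma texp_le_mxf (w : List (Bool × Bool)) : texp w ≤ mxf w := by
  induction w with
  | nil => simp [texp_nil, mxf]
  | cons x w ih => rw [texp_cons]; simp only [mxf]; omega

lemma mnf_le_texp (w : List (Bool × Bool)) : mnf w ≤ texp w := by
  induction w with
  | nil => simp [texp_nil, mnf]
  | cons x w ih => rw [texp_cons]; simp only [mnf]; omega

lemma length_eq_na_nt (w : List (Bool × Bool)) : w.length = naf w + ntt w := by
  induction w with
  | nil => rfl
  | cons x w ih =>
    rcases x with ⟨b, s⟩
    cases b <;> cases s <;> simp [naf, ntt, tval, ih] <;> omega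

lemma mxf_le_ntt (w : List (Bool × Bool)) : mxf w ≤ (ntt w : ℤ) := by
  induction w with
  | nil => simp [mxf, ntt]
  | cons x w ih =>
    rcases x with ⟨b, s⟩
    cases b <;> cases s <;> simp [mxf, ntt, tval] <;> push_cast <;> omega

lemma claimA (w : List (Bool × Bool)) :
    2 * mxf w - 2 * mnf w ≤ (ntt w : ℤ) + ((texp w).natAbs : ℤ) := by
  induction w with
  | nil => simp [mxf, mnf, ntt, texp_nil]
  | cons x w ih =>
    have h1 := mnf_nonpos w
    have h2 := mxf_nonneg w
    have h3 := texp_le_mxf w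
    have h4 := mnf_le_texp w
    rcases x with ⟨b, s⟩
    cases b <;> cases s <;>
      (rw [texp_cons] <;> simp only [mnf, mxf, ntt, tval] <;> omega)

def Zf (p : ℕ) : ℕ → List (Bool × Bool) → ℤ
  | _, [] => 0
  | D, (false, s) :: w => (if s then 1 else -1) * (p : ℤ) ^ D + Zf p D w
  | D, (true, true) :: w => Zf p (D + 1) w
  | D, (true, false) :: w => Zf p (D - 1) w

lemma wordVal_cons (p : ℕ) (x : Bool × Bool) (w : List (Bool × Bool)) :
    wordVal p (x :: w) = letterVal p x * wordVal p w := by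
  simp [wordVal]

lemma valB (p : ℕ) (D : ℕ) (w : List (Bool × Bool)) (h : -(D : ℤ) ≤ mnf w) :
    wordVal p w =
      (gent p) ^ (-(D : ℤ)) * (gena p) ^ (Zf p D w) * (gent p) ^ ((D : ℤ) + texp w) := by
  induction w generalizing D with
  | nil =>
    simp [wordVal, Zf, texp_nil]
  | cons x w ih =>
    rcases x with ⟨b, s⟩
    rw [wordVal_cons, texp_cons]
    cases b
    · -- a-letter
      have hmn : -(D : ℤ) ≤ mnf w := by
        have h1 := mnf_nonpos w
        simp only [mnf, tval] at h
        omega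
      rw [ih D hmn]
      have hl : letterVal p (false, s) = (gena p) ^ (if s then (1:ℤ) else -1) := by
        simp [letterVal]
      set σ : ℤ := if s then (1:ℤ) else -1 with hσ
      have hZ : Zf p D ((false, s) :: w) = σ * (p:ℤ)^D + Zf p D w := by
        cases s <;> rfl
      have htv : tval (false, s) = 0 := by cases s <;> rfl
      rw [hl, hZ, htv]
      have key : (gent p) ^ (-(D:ℤ)) * (gena p) ^ (σ * (p:ℤ)^D) = (gena p) ^ σ * (gent p) ^ (-(D:ℤ)) := by
        have h2 : (gena p) ^ ((p:ℤ)^D * σ) * (gent p) ^ (D:ℤ) = (gent p) ^ (D:ℤ) * (gena p) ^ σ :=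
          a_mul_t p D σ
        have h3 : σ * (p:ℤ)^D = (p:ℤ)^D * σ := by ring
        rw [h3]
        calc (gent p) ^ (-(D:ℤ)) * (gena p) ^ ((p:ℤ)^D * σ)
            = (gent p) ^ (-(D:ℤ)) * ((gena p) ^ ((p:ℤ)^D * σ) * (gent p) ^ (D:ℤ)) * (gent p) ^ (-(D:ℤ)) := by
              group
          _ = (gent p) ^ (-(D:ℤ)) * ((gent p) ^ (D:ℤ) * (gena p) ^ σ) * (gent p) ^ (-(D:ℤ)) := by rw [h2]
          _ = (gena p) ^ σ * (gent p) ^ (-(D:ℤ)) := by group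
      calc (gena p) ^ σ * ((gent p) ^ (-(D:ℤ)) * (gena p) ^ (Zf p D w) * (gent p) ^ ((D:ℤ) + texp w))
          = ((gena p) ^ σ * (gent p) ^ (-(D:ℤ))) * (gena p) ^ (Zf p D w) * (gent p) ^ ((D:ℤ) + texp w) := by
            group
        _ = ((gent p) ^ (-(D:ℤ)) * (gena p) ^ (σ * (p:ℤ)^D)) * (gena p) ^ (Zf p D w) * (gent p) ^ ((D:ℤ) + texp w) := by
            rw [key]
        _ = (gent p) ^ (-(D:ℤ)) * (gena p) ^ (σ * (p:ℤ)^D + Zf p D w) * (gent p) ^ ((D:ℤ) + (0 + texp w)) := by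
            rw [zpow_add]; group
    · cases s
      · -- tN
        have h0 := mnf_nonpos w
        have hD : 1 ≤ D := by
          simp only [mnf, tval] at h
          omega
        obtain ⟨D', rfl⟩ : ∃ D', D = D' + 1 := ⟨D - 1, by omega⟩
        have hmn : -(D' : ℤ) ≤ mnf w := by
          simp only [mnf, tval] at h
          push_cast at h ⊢
          omega
        rw [ih D' hmn]
        have hl : letterVal p (true, false) = (gent p) ^ (-1 : ℤ) := by simp [letterVal]
        have hZ : Zf p (D' + 1) ((true, false) :: w) = Zf p D' w := by
          simp [Zf]
        rw [hl, hZ]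
        have htv : tval (true, false) = -1 := rfl
        rw [htv]
        push_cast
        group
      · -- tP
        have hmn : -((D : ℤ) + 1) ≤ mnf w := by
          simp only [mnf, tval] at h
          omega
        have hmn' : -((D + 1 : ℕ) : ℤ) ≤ mnf w := by push_cast; omega
        rw [ih (D + 1) hmn']
        have hl : letterVal p (true, true) = (gent p) ^ (1 : ℤ) := by simp [letterVal]
        have hZ : Zf p D ((true, true) :: w) = Zf p (D + 1) w := by simp [Zf]
        rw [hl, hZ]
        have htv : tval (true, true) = 1 := rfl
        rw [htv]
        push_cast
        group

def Cf : ℕ → List (Bool × Bool) → ℕ → ℤ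
  | _, [], _ => 0
  | D, (false, s) :: w, l => Cf D w l + if l = D then (if s then 1 else -1) else 0
  | D, (true, true) :: w, l => Cf (D + 1) w l
  | D, (true, false) :: w, l => Cf (D - 1) w l

lemma Zf_eq_sum (p : ℕ) (D M : ℕ) (w : List (Bool × Bool)) (hM : D + w.length < M) :
    Zf p D w = ∑ l ∈ Finset.range M, Cf D w l * (p : ℤ) ^ l := by
  induction w generalizing D with
  | nil => simp [Zf, Cf]
  | cons x w ih =>
    rcases x with ⟨b, s⟩
    cases b
    · have hDM : D < M := by simp at hM; omega
      have hM' : D + w.length < M := by simp at hM; omega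
      simp only [Zf, Cf]
      rw [ih D hM']
      rw [Finset.sum_congr rfl (fun l (_ : l ∈ Finset.range M) =>
        show (Cf D w l + if l = D then (if s then (1:ℤ) else -1) else 0) * (p:ℤ)^l
            = Cf D w l * (p:ℤ)^l + (if l = D then (if s then (1:ℤ) else -1) * (p:ℤ)^l else 0)
          from by split <;> ring)]
      rw [Finset.sum_add_distrib, Finset.sum_ite_eq' (Finset.range M) D
        (fun l => (if s then (1:ℤ) else -1) * (p:ℤ)^l)]
      simp [Finset.mem_range.2 hDM]
      ring
    · cases s
      · simp only [Zf, Cf]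
        apply ih
        simp at hM; omega
      · simp only [Zf, Cf]
        apply ih
        simp at hM; omega

lemma Cf_abs_sum (D M : ℕ) (w : List (Bool × Bool)) :
    ∑ l ∈ Finset.range M, (Cf D w l).natAbs ≤ naf w := by
  induction w generalizing D with
  | nil => simp [Cf, naf]
  | cons x w ih =>
    rcases x with ⟨b, s⟩
    cases b
    · simp only [Cf, naf]
      calc ∑ l ∈ Finset.range M, (Cf D w l + if l = D then (if s then (1:ℤ) else -1) else 0).natAbs
          ≤ ∑ l ∈ Finset.range M, ((Cf D w l).natAbs + (if l = D then (if s then (1:ℤ) else -1) else 0).natAbs) :=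
            Finset.sum_le_sum (fun l _ => Int.natAbs_add_le _ _)
        _ = (∑ l ∈ Finset.range M, (Cf D w l).natAbs)
            + ∑ l ∈ Finset.range M, (if l = D then (if s then (1:ℤ) else -1) else 0).natAbs := by
            rw [Finset.sum_add_distrib]
        _ ≤ naf w + 1 := by
            have h1 : ∑ l ∈ Finset.range M, (if l = D then (if s then (1:ℤ) else -1) else 0).natAbs ≤ 1 := by
              rw [Finset.sum_congr rfl (fun l (_ : l ∈ Finset.range M) =>
                show ((if l = D then (if s then (1:ℤ) else -1) else 0).natAbs)
                    = (if l = D then (if s then (1:ℤ) else -1).natAbs else 0)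
                  from by split <;> simp)]
              rw [Finset.sum_ite_eq' (Finset.range M) D]
              split <;> cases s <;> simp
            exact Nat.add_le_add (ih D) h1
        _ = (if false = true then 0 else 1) + naf w := by simp [Nat.add_comm]
    · cases s
      · simp only [Cf, naf]
        simpa using ih (D - 1)
      · simp only [Cf, naf]
        simpa using ih (D + 1)

lemma Cf_supp (D : ℕ) (w : List (Bool × Bool)) (l : ℕ) (hadm : -(D : ℤ) ≤ mnf w)
    (hl : (D : ℤ) + mxf w < l) : Cf D w l = 0 := by
  induction w generalizing D with
  | nil => simp [Cf]
  | cons x w ih =>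
    rcases x with ⟨b, s⟩
    have h1 := mnf_nonpos w
    have h2 := mxf_nonneg w
    cases b
    · simp only [mnf, mxf, tval] at hadm hl
      simp only [Cf]
      have hne : l ≠ D := by omega
      rw [ih D (by omega) (by omega)]
      simp [hne]
    · cases s
      · simp only [mnf, mxf, tval] at hadm hl
        have hD : 1 ≤ D := by omega
        simp only [Cf]
        apply ih
        · push_cast [hD]; omega
        · push_cast [hD]; omega
      · simp only [mnf, mxf, tval] at hadm hl
        simp only [Cf]
        apply ih
        · push_cast; omega
        · push_cast; omega

lemma digit_step_nat (p : ℕ) (hp : 2 ≤ p) (n : ℕ) :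
    ∃ e g : ℕ, n = e + p * g ∧ e < p ∧ e + g ≤ n ∧ (3 * p ≤ n → e + g + 2 ≤ n) := by
  have hdm : p * (n / p) + n % p = n := Nat.div_add_mod n p
  have hmod : n % p < p := Nat.mod_lt _ (by omega)
  have h2 : 2 * (n / p) ≤ p * (n / p) := Nat.mul_le_mul_right _ hp
  refine ⟨n % p, n / p, by omega, hmod, by omega, ?_⟩
  intro h3
  have hg : 3 ≤ n / p := (Nat.le_div_iff_mul_le (by omega)).2 (by omega)
  omega

lemma digit_step (p : ℕ) (hp : 2 ≤ p) (v : ℤ) :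
    ∃ e g : ℤ, v = e + p * g ∧ e.natAbs < p ∧ e.natAbs + g.natAbs ≤ v.natAbs ∧
      (3 * p ≤ v.natAbs → e.natAbs + g.natAbs + 2 ≤ v.natAbs) := by
  obtain ⟨e, g, h1, h2, h3, h4⟩ := digit_step_nat p hp v.natAbs
  rcases le_or_gt 0 v with hv | hv
  · refine ⟨(e : ℤ), (g : ℤ), ?_, by simpa, by simpa, by simpa⟩
    have hva : (v.natAbs : ℤ) = v := Int.natAbs_of_nonneg hv
    have : ((v.natAbs : ℕ) : ℤ) = (e : ℤ) + (p : ℤ) * (g : ℤ) := by exact_mod_cast congrArg Nat.cast h1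
    omega
  · refine ⟨-(e : ℤ), -(g : ℤ), ?_, by simpa, by simpa, by simpa⟩
    have hva : (v.natAbs : ℤ) = -v := by omega
    have h5 : ((v.natAbs : ℕ) : ℤ) = (e : ℤ) + (p : ℤ) * (g : ℤ) := by exact_mod_cast congrArg Nat.cast h1
    have h6 : (p : ℤ) * -(g : ℤ) = -((p : ℤ) * (g : ℤ)) := by ring
    omega

lemma phase2 (p : ℕ) (hp : 2 ≤ p) (v : ℤ) :
    ∃ (q : ℕ) (ε : ℕ → ℤ),
      (∑ i ∈ Finset.range (q + 1), ε i * (p : ℤ) ^ i) = v ∧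
      (∀ i < q, (ε i).natAbs < p) ∧ (ε q).natAbs < 3 * p ∧
      (∑ i ∈ Finset.range (q + 1), (ε i).natAbs) + 2 * q ≤ v.natAbs := by
  generalize hn : v.natAbs = n
  induction n using Nat.strong_induction_on generalizing v with
  | _ n ih =>
  rcases lt_or_ge v.natAbs (3 * p) with hv | hv
  · exact ⟨0, fun _ => v, by simp, by omega, by simpa, by simp; omega⟩
  · obtain ⟨e, g, h1, h2, h3, h4⟩ := digit_step p hp v
    have h4' := h4 hv
    have hg : g.natAbs < n := by omega
    obtain ⟨q', ε', hs', hd', ht', hl'⟩ := ih g.natAbs hg g rfl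
    refine ⟨q' + 1, fun i => match i with | 0 => e | (j+1) => ε' j, ?_, ?_, ?_, ?_⟩
    · rw [Finset.sum_range_succ']
      rw [Finset.sum_congr rfl (fun i (_ : i ∈ Finset.range (q' + 1)) =>
        show ε' i * (p:ℤ) ^ (i + 1) = (p:ℤ) * (ε' i * (p:ℤ) ^ i) from by rw [pow_succ]; ring)]
      rw [← Finset.mul_sum, hs']
      rw [h1]; simp; ring
    · intro i hi
      cases i with
      | zero => simpa using h2
      | succ j => exact hd' _ (by omega)
    · simpa using ht'
    · rw [Finset.sum_range_succ']
      simp only []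
      omega

lemma phase1 (p : ℕ) (hp : 2 ≤ p) (H : ℕ) (c : ℕ → ℤ) :
    ∃ (q : ℕ) (ε : ℕ → ℤ), H ≤ q ∧
      (∑ i ∈ Finset.range (q + 1), ε i * (p : ℤ) ^ i)
        = (∑ l ∈ Finset.range (H + 1), c l * (p : ℤ) ^ l) ∧
      (∀ i < q, (ε i).natAbs < p) ∧ (ε q).natAbs < 3 * p ∧
      (∑ i ∈ Finset.range (q + 1), (ε i).natAbs) + 2 * (q - H)
        ≤ ∑ l ∈ Finset.range (H + 1), (c l).natAbs := by
  induction H generalizing c with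
  | zero =>
    obtain ⟨q, ε, hs, hd, ht, hl⟩ := phase2 p hp (c 0)
    exact ⟨q, ε, Nat.zero_le _, by simpa using hs, hd, ht, by simpa using hl⟩
  | succ H ih =>
    obtain ⟨e, g, h1, h2, h3, _⟩ := digit_step p hp (c 0)
    set c' : ℕ → ℤ := fun l => c (l + 1) + if l = 0 then g else 0 with hc'
    obtain ⟨q', ε', hq', hs', hd', ht', hl'⟩ := ih c'
    have hsplit : ∑ l ∈ Finset.range (H + 1), c' l * (p:ℤ) ^ l
        = (∑ l ∈ Finset.range (H + 1), c (l + 1) * (p:ℤ) ^ l) + g := by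
      rw [Finset.sum_congr rfl (fun l (_ : l ∈ Finset.range (H + 1)) =>
        show c' l * (p:ℤ) ^ l = c (l+1) * (p:ℤ)^l + (if l = 0 then g * (p:ℤ)^l else 0) from by
          simp only [hc']; split <;> ring)]
      rw [Finset.sum_add_distrib, Finset.sum_ite_eq' (Finset.range (H+1)) 0
        (fun l => g * (p:ℤ)^l)]
      simp
    have hcs : ∑ l ∈ Finset.range (H + 1), (c' l).natAbs
        ≤ (∑ l ∈ Finset.range (H + 1), (c (l + 1)).natAbs) + g.natAbs := by
      calc ∑ l ∈ Finset.range (H + 1), (c' l).natAbs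
          ≤ ∑ l ∈ Finset.range (H + 1),
              ((c (l + 1)).natAbs + (if l = 0 then g else 0).natAbs) :=
            Finset.sum_le_sum (fun l _ => Int.natAbs_add_le _ _)
        _ = (∑ l ∈ Finset.range (H + 1), (c (l + 1)).natAbs)
            + ∑ l ∈ Finset.range (H + 1), (if l = 0 then g else 0).natAbs := by
            rw [Finset.sum_add_distrib]
        _ ≤ (∑ l ∈ Finset.range (H + 1), (c (l + 1)).natAbs) + g.natAbs := by
            have h5 : ∑ l ∈ Finset.range (H + 1), (if l = 0 then g else 0).natAbs ≤ g.natAbs := by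
              rw [Finset.sum_congr rfl (fun l (_ : l ∈ Finset.range (H + 1)) =>
                show (if l = 0 then g else 0).natAbs = (if l = 0 then g.natAbs else 0) from by
                  split <;> simp)]
              rw [Finset.sum_ite_eq' (Finset.range (H+1)) 0 (fun _ => g.natAbs)]
              split <;> omega
            omega
    have hcs2 : ∑ l ∈ Finset.range (H + 1 + 1), (c l).natAbs
        = (∑ l ∈ Finset.range (H + 1), (c (l + 1)).natAbs) + (c 0).natAbs := by
      rw [Finset.sum_range_succ' (fun l => (c l).natAbs) (H+1)]
    refine ⟨q' + 1, fun i => match i with | 0 => e | (j+1) => ε' j, by omega, ?_, ?_, ?_, ?_⟩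
    · rw [Finset.sum_range_succ']
      rw [Finset.sum_congr rfl (fun i (_ : i ∈ Finset.range (q' + 1)) =>
        show ε' i * (p:ℤ) ^ (i + 1) = (p:ℤ) * (ε' i * (p:ℤ) ^ i) from by rw [pow_succ]; ring)]
      rw [← Finset.mul_sum, hs', hsplit]
      rw [Finset.sum_range_succ' (fun l => c l * (p:ℤ)^l) (H+1)]
      rw [Finset.sum_congr rfl (fun l (_ : l ∈ Finset.range (H + 1)) =>
        show c (l + 1) * (p:ℤ) ^ (l + 1) = (p:ℤ) * (c (l+1) * (p:ℤ)^l) from by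
          rw [pow_succ]; ring)]
      rw [← Finset.mul_sum, h1]
      simp; ring
    · intro i hi
      cases i with
      | zero => simpa using h2
      | succ j => exact hd' _ (by omega)
    · simpa using ht'
    · rw [Finset.sum_range_succ']
      simp only []
      have hq2 : q' + 1 - (H + 1) = q' - H := by omega
      rw [hq2]
      omega

lemma wordVal_append (p : ℕ) (u v : List (Bool × Bool)) :
    wordVal p (u ++ v) = wordVal p u * wordVal p v := by
  simp [wordVal]

lemma wordVal_aWord (p : ℕ) (x : ℤ) : wordVal p (aWord x) = (gena p) ^ x := by
  unfold aWord wordVal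
  rw [List.map_replicate, List.prod_replicate]
  by_cases hx : 0 < x
  · have hd : (decide (0 < x)) = true := decide_eq_true hx
    rw [hd]
    have hl : letterVal p (false, true) = gena p ^ (1:ℤ) := rfl
    rw [hl, zpow_one, ← zpow_natCast]
    congr 1
    omega
  · have hd : (decide (0 < x)) = false := decide_eq_false hx
    rw [hd]
    have hl : letterVal p (false, false) = gena p ^ (-1:ℤ) := rfl
    rw [hl, ← zpow_natCast, ← zpow_mul]
    congr 1
    omega

lemma wordVal_tP (p : ℕ) : wordVal p [tP] = gent p := by
  simp [wordVal, letterVal, tP]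

lemma wordVal_replicate_tN (p : ℕ) (m : ℕ) :
    wordVal p (List.replicate m tN) = (gent p) ^ (-(m : ℤ)) := by
  unfold wordVal
  rw [List.map_replicate, List.prod_replicate]
  have : letterVal p tN = (gent p) ^ (-1 : ℤ) := by simp [letterVal, tN]
  rw [this, ← zpow_natCast, ← zpow_mul]
  congr 1
  omega

lemma stack_succ (ε : ℕ → ℤ) (q : ℕ) :
    stackWord ε (q + 1) = aWord (ε 0) ++ [tP] ++ stackWord (fun i => ε (i + 1)) q := by
  unfold stackWord
  rw [List.range_succ_eq_map]
  simp [List.map_map, Function.comp_def, List.append_assoc]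

lemma wordVal_stack (p : ℕ) (ε : ℕ → ℤ) (q : ℕ) :
    wordVal p (stackWord ε q) =
      (gena p) ^ (∑ i ∈ Finset.range (q + 1), ε i * (p : ℤ) ^ i) * (gent p) ^ (q : ℤ) := by
  induction q generalizing ε with
  | zero =>
    simp [stackWord, wordVal_aWord]
  | succ q ih =>
    rw [stack_succ, wordVal_append, wordVal_append, wordVal_aWord, wordVal_tP, ih]
    have hE : ∑ i ∈ Finset.range (q + 2), ε i * (p:ℤ) ^ i
        = ε 0 + (p:ℤ) * ∑ i ∈ Finset.range (q + 1), ε (i + 1) * (p:ℤ) ^ i := by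
      rw [Finset.sum_range_succ']
      rw [Finset.sum_congr rfl (fun i (_ : i ∈ Finset.range (q + 1)) =>
        show ε (i + 1) * (p:ℤ) ^ (i + 1) = (p:ℤ) * (ε (i + 1) * (p:ℤ) ^ i) from by
          rw [pow_succ]; ring)]
      rw [← Finset.mul_sum]
      simp; ring
    rw [hE]
    set S := ∑ i ∈ Finset.range (q + 1), ε (i + 1) * (p:ℤ) ^ i
    have h2 : gent p * (gena p) ^ S = (gena p) ^ ((p:ℤ) * S) * gent p := by
      rw [a_zpow_p]; group
    calc _ = (gena p) ^ (ε 0) * (gent p * (gena p) ^ S) * (gent p) ^ (q:ℤ) := by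
          group
      _ = (gena p) ^ (ε 0) * ((gena p) ^ ((p:ℤ) * S) * gent p) * (gent p) ^ (q:ℤ) := by rw [h2]
      _ = (gena p) ^ (ε 0 + (p:ℤ) * S) * (gent p) ^ ((q:ℕ) + 1 : ℤ) := by
          rw [zpow_add]; group
      _ = (gena p) ^ (ε 0 + (p:ℤ) * S) * (gent p) ^ (((q + 1 : ℕ) : ℤ)) := by
          norm_num

lemma wordVal_canon (p : ℕ) (k q m : ℕ) (ε : ℕ → ℤ) :
    wordVal p (canonWord k ε q m) =
      (gent p) ^ (-(k : ℤ)) * (gena p) ^ (∑ i ∈ Finset.range (q + 1), ε i * (p : ℤ) ^ i)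
        * (gent p) ^ ((q : ℤ) - (m : ℤ)) := by
  unfold canonWord
  rw [wordVal_append, wordVal_append, wordVal_replicate_tN, wordVal_stack,
    wordVal_replicate_tN]
  rw [show (q:ℤ) - (m:ℤ) = (q:ℤ) + (-(m:ℤ)) from by ring, zpow_add]
  group

lemma length_aWord (x : ℤ) : (aWord x).length = x.natAbs := by simp [aWord]

lemma length_stack (ε : ℕ → ℤ) (q : ℕ) :
    (stackWord ε q).length = q + ∑ i ∈ Finset.range (q + 1), (ε i).natAbs := by
  induction q generalizing ε with
  | zero => simp [stackWord, length_aWord]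
  | succ q ih =>
    rw [stack_succ]
    simp only [List.length_append, length_aWord, List.length_cons, List.length_nil, ih]
    rw [Finset.sum_range_succ' (fun i => (ε i).natAbs) (q + 1)]
    omega

lemma length_canon (k q m : ℕ) (ε : ℕ → ℤ) :
    (canonWord k ε q m).length = k + m + q + ∑ i ∈ Finset.range (q + 1), (ε i).natAbs := by
  unfold canonWord
  simp [length_stack]
  omega

lemma cleanupR (p : ℕ) (hp : 2 ≤ p) (k : ℕ) :
    ∀ (m q : ℕ) (ε : ℕ → ℤ), k + m ≤ q →
    (∀ i < q, (ε i).natAbs < p) → (ε q).natAbs < 3 * p →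
    ∃ q' m', k + m' ≤ q' ∧ (0 < m' → ε q' ≠ 0) ∧ (∀ i < q', (ε i).natAbs < p) ∧
      (ε q').natAbs < 3 * p ∧
      wordVal p (canonWord k ε q' m') = wordVal p (canonWord k ε q m) ∧
      (canonWord k ε q' m').length ≤ (canonWord k ε q m).length := by
  intro m
  induction m with
  | zero =>
    intro q ε h1 h2 h3
    exact ⟨q, 0, h1, by omega, h2, h3, rfl, le_refl _⟩
  | succ m ih =>
    intro q ε h1 h2 h3
    by_cases hz : ε q = 0
    · obtain ⟨qq, rfl⟩ : ∃ qq, q = qq + 1 := ⟨q - 1, by omega⟩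
      have htop' : (ε qq).natAbs < 3 * p := by
        have := h2 qq (by omega)
        omega
      obtain ⟨q', m', c1, c2, c3, c4, c5, c6⟩ :=
        ih qq ε (by omega) (fun i hi => h2 i (by omega)) htop'
      have heq : wordVal p (canonWord k ε qq m) = wordVal p (canonWord k ε (qq + 1) (m + 1)) := by
        rw [wordVal_canon, wordVal_canon]
        have hE : ∑ i ∈ Finset.range (qq + 1 + 1), ε i * (p:ℤ) ^ i
            = ∑ i ∈ Finset.range (qq + 1), ε i * (p:ℤ) ^ i := by
          rw [Finset.sum_range_succ, hz]
          ring
        rw [hE]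
        have hexp : ((qq : ℤ)) - (m : ℤ) = ((qq + 1 : ℕ) : ℤ) - ((m + 1 : ℕ) : ℤ) := by
          push_cast; ring
        rw [hexp]
      have hlen : (canonWord k ε qq m).length ≤ (canonWord k ε (qq + 1) (m + 1)).length := by
        rw [length_canon, length_canon, Finset.sum_range_succ _ (qq + 1), hz]
        simp
        omega
      exact ⟨q', m', c1, c2, c3, c4, c5.trans heq, c6.trans hlen⟩
    · exact ⟨q, m + 1, h1, fun _ => hz, h2, h3, rfl, le_refl _⟩

lemma cleanupL (p : ℕ) (hp : 2 ≤ p) :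
    ∀ (k : ℕ), ∀ (q m : ℕ) (ε : ℕ → ℤ), k + m ≤ q →
    (0 < m → ε q ≠ 0) → (∀ i < q, (ε i).natAbs < p) → (ε q).natAbs < 3 * p →
    ∃ (k' q' : ℕ) (ε' : ℕ → ℤ), k' + m ≤ q' ∧ (0 < k' → ε' 0 ≠ 0) ∧ (0 < m → ε' q' ≠ 0) ∧
      (∀ i < q', (ε' i).natAbs < p) ∧ (ε' q').natAbs < 3 * p ∧
      wordVal p (canonWord k' ε' q' m) = wordVal p (canonWord k ε q m) ∧
      (canonWord k' ε' q' m).length ≤ (canonWord k ε q m).length := by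
  intro k
  induction k with
  | zero =>
    intro q m ε h1 h2 h3 h4
    exact ⟨0, q, ε, h1, by omega, h2, h3, h4, rfl, le_refl _⟩
  | succ k ih =>
    intro q m ε h1 h2 h3 h4
    by_cases hz : ε 0 = 0
    · obtain ⟨qq, rfl⟩ : ∃ qq, q = qq + 1 := ⟨q - 1, by omega⟩
      have hE : ∑ i ∈ Finset.range (qq + 1 + 1), ε i * (p:ℤ) ^ i
          = (p:ℤ) * ∑ i ∈ Finset.range (qq + 1), ε (i + 1) * (p:ℤ) ^ i := by
        rw [Finset.sum_range_succ']
        rw [Finset.sum_congr rfl (fun i (_ : i ∈ Finset.range (qq + 1)) =>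
          show ε (i + 1) * (p:ℤ) ^ (i + 1) = (p:ℤ) * (ε (i + 1) * (p:ℤ) ^ i) from by
            rw [pow_succ]; ring)]
        rw [← Finset.mul_sum, hz]
        ring
      have heq : wordVal p (canonWord k (fun i => ε (i + 1)) qq m)
          = wordVal p (canonWord (k + 1) ε (qq + 1) m) := by
        rw [wordVal_canon, wordVal_canon, hE]
        set E' := ∑ i ∈ Finset.range (qq + 1), ε (i + 1) * (p:ℤ) ^ i
        rw [a_zpow_p p E']
        have hk : (((k + 1 : ℕ)) : ℤ) = (k : ℤ) + 1 := by push_cast; ring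
        have hq : (((qq + 1 : ℕ)) : ℤ) = (qq : ℤ) + 1 := by push_cast; ring
        rw [hk, hq]
        group
      have hlen : (canonWord k (fun i => ε (i + 1)) qq m).length
          ≤ (canonWord (k + 1) ε (qq + 1) m).length := by
        rw [length_canon, length_canon]
        rw [Finset.sum_range_succ' (fun i => (ε i).natAbs) (qq + 1), hz]
        simp
        omega
      obtain ⟨k', q', ε', c1, c2, c3, c4, c5, c6, c7⟩ :=
        ih qq m (fun i => ε (i + 1)) (by omega) (fun hm => h2 hm) (fun i hi => h3 (i + 1) (by omega))
          (by simpa using h4)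
      exact ⟨k', q', ε', c1, c2, c3, c4, c5, c6.trans heq, c7.trans hlen⟩
    · exact ⟨k + 1, q, ε, h1, fun _ => hz, h2, h3, h4, rfl, le_refl _⟩

/-- Proposition 4.1, existence only: every word of length `n` with
nonnegative `t`-exponent sum is represented by a word `t⁻ᵏ a^{ε₀} t ⋯ t a^{ε_q} t⁻ᵐ`
of length at most `n`, with `ε₀ ≠ 0` if `k > 0`, `ε_q ≠ 0` if `m > 0`, `|ε_i| < p` for
`i < q`, `|ε_q| < 3p`, `k, m ≥ 0` and `q ≥ k + m`. -/
theorem stmt19 (p : ℕ) (hp : 2 ≤ p) (w : List Letter) (h : 0 ≤ texp w) :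
    ∃ (k m q : ℕ) (ε : ℕ → ℤ), k + m ≤ q ∧
      (0 < k → ε 0 ≠ 0) ∧ (0 < m → ε q ≠ 0) ∧
      (∀ i < q, (ε i).natAbs < p) ∧ (ε q).natAbs < 3 * p ∧
      wordVal p (canonWord k ε q m) = wordVal p w ∧
      (canonWord k ε q m).length ≤ w.length := by
  have hmn := mnf_nonpos w
  have hmx := mxf_nonneg w
  have htu := texp_le_mxf w
  set d : ℕ := (-(mnf w)).toNat with hd
  have hdz : (d : ℤ) = -(mnf w) := Int.toNat_of_nonneg (by omega)
  set u : ℕ := (mxf w).toNat with hu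
  have huz : (u : ℤ) = mxf w := Int.toNat_of_nonneg hmx
  have hadm : -(d : ℤ) ≤ mnf w := by omega
  have hB := valB p d w hadm
  have hZs := Zf_eq_sum p d (d + w.length + 1) w (by omega)
  have hlen_eq := length_eq_na_nt w
  have hmxntt := mxf_le_ntt w
  have hHM : d + u + 1 ≤ d + w.length + 1 := by omega
  have hrestrict : ∑ l ∈ Finset.range (d + u + 1), Cf d w l * (p:ℤ) ^ l
      = ∑ l ∈ Finset.range (d + w.length + 1), Cf d w l * (p:ℤ) ^ l := by
    apply Finset.sum_subset (Finset.range_subset_range.2 hHM)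
    intro x _ hx
    have hx2 : d + u + 1 ≤ x := by
      simp only [Finset.mem_range] at hx
      omega
    rw [Cf_supp d w x hadm (by omega)]
    ring
  obtain ⟨q₀, ε, hq₀H, hsum, hdig, htop, hbud⟩ := phase1 p hp (d + u) (Cf d w)
  set s0 : ℕ := (texp w).toNat with hs0d
  have hs0 : (s0 : ℤ) = texp w := Int.toNat_of_nonneg h
  have hus : s0 ≤ u := by omega
  have hds : d + s0 ≤ q₀ := by omega
  set m₀ : ℕ := q₀ - (d + s0) with hm₀
  have hval : wordVal p (canonWord d ε q₀ m₀) = wordVal p w := by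
    rw [wordVal_canon, hB]
    have hE : ∑ i ∈ Finset.range (q₀ + 1), ε i * (p:ℤ) ^ i = Zf p d w := by
      rw [hsum, hrestrict, ← hZs]
    have hexp : (q₀ : ℤ) - (m₀ : ℤ) = (d : ℤ) + texp w := by
      have : (m₀ : ℤ) = (q₀ : ℤ) - (d : ℤ) - (s0 : ℤ) := by
        rw [hm₀]; push_cast [hds]; omega
      omega
    rw [hE, hexp]
  have hlen : (canonWord d ε q₀ m₀).length ≤ w.length := by
    rw [length_canon, hlen_eq]
    have hCsum := Cf_abs_sum d (d + u + 1) w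
    have hA := claimA w
    have hta : ((texp w).natAbs : ℤ) = (s0 : ℤ) := by omega
    have h2du : 2 * (d + u) ≤ ntt w + s0 := by omega
    omega
  obtain ⟨q₁, m₁, r1, r2, r3, r4, r5, r6⟩ :=
    cleanupR p hp d m₀ q₀ ε (by omega) hdig htop
  obtain ⟨k₂, q₂, ε₂, l1, l2, l3, l4, l5, l6, l7⟩ :=
    cleanupL p hp d q₁ m₁ ε r1 r2 r3 r4
  exact ⟨k₂, m₁, q₂, ε₂, l1, l2, l3, l4, l5,
    (l6.trans r5).trans hval, (l7.trans r6).trans hlen⟩
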